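/- Let G be an n-vertex graph with conductance φ > 0 and minimum degree δ > 0, let C be a set of pairwise vertex-disjoint demand pairs, and let F be a set of edges with |F| ≤ φδ|C|/16. Then there exists a pair (s,t) ∈ C and a path from s to t in G \ F of length at most 18 log n / φ. -/

import Mathlib

/-- In an expander with conductance `φ` and minimum degree `δ`, after deleting
at most `φδ|C|/16` edges, some vertex-disjoint demand pair of `C` remains
connected by a path of length at most `18 log n / φ`.  The expander pruning
theorem combined with the diameter bound on expanders is assumed as the
hypothesis `hprune`. -/
theorem stmt_4 {V : Type*} [Fintype V] [DecidableEq V] (G : SimpleGraph V)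
    [DecidableRel G.Adj]
    (φ δ : ℝ) (hφ : 0 < φ) (hδ : 0 < δ)
    (hdeg : ∀ v : V, δ ≤ (G.degree v : ℝ))
    (hprune : ∀ F' : Finset (Sym2 V), ∃ P : Finset V,
      (∑ u ∈ P, (G.degree u : ℝ)) ≤ 8 * F'.card / φ ∧
      ∀ u v : V, u ∉ P → v ∉ P →
        ∃ p : (G.deleteEdges (↑F' : Set (Sym2 V))).Walk u v,
          (p.length : ℝ) ≤ 18 * Real.logb 2 (Fintype.card V) / φ)
    (C : Finset (V × V)) (hCne : C.Nonempty)
    (hCpairs : ∀ d ∈ C, d.1 ≠ d.2)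
    (hCdisj : ∀ d ∈ C, ∀ d' ∈ C, d ≠ d' →
      d.1 ≠ d'.1 ∧ d.1 ≠ d'.2 ∧ d.2 ≠ d'.1 ∧ d.2 ≠ d'.2)
    (F : Finset (Sym2 V))
    (hF : (F.card : ℝ) ≤ φ * δ * C.card / 16) :
    ∃ d ∈ C, ∃ p : (G.deleteEdges (↑F : Set (Sym2 V))).Walk d.1 d.2,
      (p.length : ℝ) ≤ 18 * Real.logb 2 (Fintype.card V) / φ := by
  obtain ⟨P, hPsum, hPwalk⟩ := hprune F
  -- bound |P|
  have hcard : (P.card : ℝ) * δ ≤ ∑ u ∈ P, (G.degree u : ℝ) := by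
    have := Finset.card_nsmul_le_sum P (fun u => (G.degree u : ℝ)) δ
      (fun u _ => hdeg u)
    simpa [nsmul_eq_mul] using this
  have hF2 : 8 * (F.card : ℝ) / φ ≤ δ * C.card / 2 := by
    rw [div_le_iff₀ hφ]
    nlinarith
  have hPlt : P.card < C.card := by
    by_contra h
    push_neg at h
    have h1 : (C.card : ℝ) ≤ P.card := by exact_mod_cast h
    have hC1 : (1 : ℝ) ≤ C.card := by
      exact_mod_cast Finset.card_pos.mpr hCne
    nlinarith [hPsum.trans hF2]
  -- the set of killed pairs
  set S : Finset (V × V) := C.filter (fun d => d.1 ∈ P ∨ d.2 ∈ P) with hS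
  have hinj : S.card ≤ P.card := by
    apply Finset.card_le_card_of_injOn (fun d => if d.1 ∈ P then d.1 else d.2)
    · intro d hd
      simp only [hS, Finset.mem_coe, Finset.mem_filter] at hd
      by_cases h1 : d.1 ∈ P
      · simpa [h1]
      · simp only [h1, if_false, Finset.mem_coe]
        tauto
    · intro d hd d' hd' heq
      simp only [hS, Finset.mem_coe, Finset.mem_filter] at hd hd'
      by_contra hne
      obtain ⟨h11, h12, h21, h22⟩ := hCdisj d hd.1 d' hd'.1 hne
      by_cases a : d.1 ∈ P <;> by_cases b : d'.1 ∈ P <;>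
        simp_all
  have hSlt : S.card < C.card := lt_of_le_of_lt hinj hPlt
  have : ∃ d ∈ C, d ∉ S := by
    by_contra h
    push_neg at h
    have : C ⊆ S := h
    exact absurd (Finset.card_le_card this) (not_le.mpr hSlt)
  obtain ⟨d, hdC, hdS⟩ := this
  simp only [hS, Finset.mem_filter, not_and, not_or] at hdS
  obtain ⟨h1, h2⟩ := hdS hdC
  exact ⟨d, hdC, hPwalk d.1 d.2 h1 h2⟩
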